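/- Let q > 1 be a prime power, n > t ≥ s ≥ 2, and let P be a vector space partition of F_q^n of hole-type (t, s, m_1) with exactly l·q^s + x members of dimension ≥ s, where x ≥ 1, and with m_1 = b·q^s + c ≥ 1 holes for integers b, c, l ≥ 0 with (c + x − 1)/q an integer. Then there exists a hyperplane Ĥ of F_q^n such that the number of holes of P in Ĥ equals b̂·q^{s−1} + (c+x−1)/q for some integer b̂ < b. -/

import Mathlib

open Module Set

section Helpers

variable {F : Type*} [Field F] [Fintype F] {n : ℕ}

lemma natcard_submodule (W : Submodule F (Fin n → F)) :
    Nat.card W = Fintype.card F ^ finrank F W := by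
  have : Fintype W := Fintype.ofFinite _
  rw [Nat.card_eq_fintype_card]
  exact card_eq_pow_finrank

open scoped Classical in
lemma filter_mem_card (W : Submodule F (Fin n → F)) :
    (Finset.univ.filter (fun v : Fin n → F => v ∈ W)).card
      = Fintype.card F ^ finrank F W := by
  rw [← Fintype.card_subtype, Fintype.card_eq_nat_card]
  exact natcard_submodule W

open scoped Classical in
lemma pointcount (W : Submodule F (Fin n → F)) :
    (Finset.univ.filter (fun v : Fin n → F => v ∈ W ∧ v ≠ 0)).card
      = Fintype.card F ^ finrank F W - 1 := by
  have he : (Finset.univ.filter (fun v : Fin n → F => v ∈ W ∧ v ≠ 0))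
      = (Finset.univ.filter (fun v : Fin n → F => v ∈ W)).erase 0 := by
    ext v
    simp only [Finset.mem_filter, Finset.mem_univ, true_and, Finset.mem_erase]
    tauto
  rw [he, Finset.card_erase_of_mem (by simp [W.zero_mem]), filter_mem_card W]

open scoped Classical in
lemma partition_count (P : Set (Submodule F (Fin n → F)))
    (hP : ∀ v : Fin n → F, v ≠ 0 → ∃! U, U ∈ P ∧ v ∈ U)
    (W : Submodule F (Fin n → F)) :
    ∑ U ∈ P.toFinite.toFinset, (Fintype.card F ^ finrank F ↥(U ⊓ W) - 1)
      = Fintype.card F ^ finrank F W - 1 := by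
  rw [← pointcount W]
  have hcover : (Finset.univ.filter (fun v : Fin n → F => v ∈ W ∧ v ≠ 0))
      = P.toFinite.toFinset.biUnion
          (fun U => Finset.univ.filter (fun v => v ∈ U ⊓ W ∧ v ≠ 0)) := by
    ext v
    simp only [Finset.mem_filter, Finset.mem_univ, true_and, Finset.mem_biUnion,
      Set.Finite.mem_toFinset, Submodule.mem_inf]
    constructor
    · rintro ⟨hvW, hv0⟩
      obtain ⟨U, ⟨hUP, hvU⟩, -⟩ := hP v hv0
      exact ⟨U, hUP, ⟨hvU, hvW⟩, hv0⟩
    · rintro ⟨U, -, ⟨-, hvW⟩, hv0⟩; exact ⟨hvW, hv0⟩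
  rw [hcover, Finset.card_biUnion]
  · exact (Finset.sum_congr rfl fun U _ => (pointcount _)).symm
  · intro U hU U' hU' hne
    rw [Function.onFun_apply, Finset.disjoint_left]
    intro v hv hv'
    simp only [Finset.mem_filter, Finset.mem_univ, true_and, Submodule.mem_inf] at hv hv'
    obtain ⟨Uu, -, huniq⟩ := hP v hv.2
    rw [Finset.mem_coe, Set.Finite.mem_toFinset] at hU hU'
    exact hne ((huniq U ⟨hU, hv.1.1⟩).trans (huniq U' ⟨hU', hv'.1.1⟩).symm)

open scoped Classical in
lemma partition_count_int (P : Set (Submodule F (Fin n → F)))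
    (hP : ∀ v : Fin n → F, v ≠ 0 → ∃! U, U ∈ P ∧ v ∈ U)
    (W : Submodule F (Fin n → F)) :
    ∑ U ∈ P.toFinite.toFinset, ((Fintype.card F : ℤ) ^ finrank F ↥(U ⊓ W) - 1)
      = (Fintype.card F : ℤ) ^ finrank F W - 1 := by
  have h := partition_count P hP W
  have hc : ∀ (m : ℕ), ((Fintype.card F : ℤ)) ^ m - 1
      = ((Fintype.card F ^ m - 1 : ℕ) : ℤ) := by
    intro m
    have h1 : 1 ≤ Fintype.card F ^ m := Nat.one_le_pow _ _ Fintype.card_pos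
    push_cast [Nat.cast_sub h1]
    ring
  calc ∑ U ∈ P.toFinite.toFinset, ((Fintype.card F : ℤ) ^ finrank F ↥(U ⊓ W) - 1)
      = ∑ U ∈ P.toFinite.toFinset,
          ((Fintype.card F ^ finrank F ↥(U ⊓ W) - 1 : ℕ) : ℤ) :=
        Finset.sum_congr rfl fun U _ => hc _
    _ = ((∑ U ∈ P.toFinite.toFinset,
          (Fintype.card F ^ finrank F ↥(U ⊓ W) - 1) : ℕ) : ℤ) := by push_cast; ring
    _ = (Fintype.card F : ℤ) ^ finrank F W - 1 := by rw [h, ← hc]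

open scoped Classical in
lemma finrank_inf_hole {W U : Submodule F (Fin n → F)} (h1 : finrank F U = 1) :
    finrank F ↥(U ⊓ W) = if U ≤ W then 1 else 0 := by
  split_ifs with h
  · rw [inf_eq_left.mpr h, h1]
  · by_contra hne
    have hle : U ⊓ W ≤ U := inf_le_left
    have hb : finrank F ↥(U ⊓ W) ≤ 1 :=
      h1 ▸ Submodule.finrank_mono hle
    have h1' : finrank F U ≤ finrank F ↥(U ⊓ W) := by omega
    have := Submodule.eq_of_le_of_finrank_le hle h1'
    exact h (this ▸ inf_le_right)

open scoped Classical in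
lemma cong_aux {s r : ℕ} (hs : 2 ≤ s) (P : Set (Submodule F (Fin n → F)))
    (hP : ∀ v : Fin n → F, v ≠ 0 → ∃! U, U ∈ P ∧ v ∈ U)
    (hdim : ∀ U ∈ P, finrank F U = 1 ∨ s ≤ finrank F U)
    (W : Submodule F (Fin n → F)) (hrW : r ≤ finrank F W)
    (hrU : ∀ U ∈ P, s ≤ finrank F U → r ≤ finrank F ↥(U ⊓ W)) :
    ((Fintype.card F : ℤ)) ^ r ∣
      ((Fintype.card F : ℤ) - 1)
          * ((P.toFinite.toFinset.filter (fun (U : Submodule F (Fin n → F)) => finrank F U = 1 ∧ U ≤ W)).card : ℤ)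
        - (((P.toFinite.toFinset.filter (fun (U : Submodule F (Fin n → F)) => s ≤ finrank F U)).card : ℤ) - 1) := by
  classical
  set q : ℤ := (Fintype.card F : ℤ) with hqdef
  have key := partition_count_int P hP W
  set S := P.toFinite.toFinset with hSdef
  rw [← Finset.sum_filter_add_sum_filter_not S
    (fun (U : Submodule F (Fin n → F)) => finrank F U = 1)] at key
  have hole_sum : ∑ U ∈ S.filter (fun (U : Submodule F (Fin n → F)) => finrank F U = 1),
        (q ^ finrank F ↥(U ⊓ W) - 1)
      = (q - 1) * ((S.filter (fun (U : Submodule F (Fin n → F)) =>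
          finrank F U = 1 ∧ U ≤ W)).card : ℤ) := by
    have hterm : ∀ U ∈ S.filter (fun (U : Submodule F (Fin n → F)) => finrank F U = 1),
        (q ^ finrank F ↥(U ⊓ W) - 1) = if U ≤ W then (q - 1) else 0 := by
      intro U hU
      rw [Finset.mem_filter] at hU
      rw [finrank_inf_hole hU.2]
      split_ifs <;> simp
    rw [Finset.sum_congr rfl hterm, ← Finset.sum_filter, Finset.sum_const,
      Finset.filter_filter, nsmul_eq_mul, mul_comm]
  have hbigset : S.filter (fun (U : Submodule F (Fin n → F)) => ¬ finrank F U = 1)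
      = S.filter (fun (U : Submodule F (Fin n → F)) => s ≤ finrank F U) := by
    apply Finset.filter_congr
    intro U hU
    rw [hSdef, Set.Finite.mem_toFinset] at hU
    rcases hdim U hU with h | h <;> simp [h] <;> omega
  rw [hbigset, hole_sum] at key
  have hbig_dvd : q ^ r ∣ ∑ U ∈ S.filter (fun (U : Submodule F (Fin n → F)) =>
      s ≤ finrank F U), q ^ finrank F ↥(U ⊓ W) :=
    Finset.dvd_sum fun U hU => by
      rw [Finset.mem_filter, hSdef, Set.Finite.mem_toFinset] at hU
      exact pow_dvd_pow q (hrU U hU.1 hU.2)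
  have hW_dvd : q ^ r ∣ q ^ finrank F W := pow_dvd_pow q hrW
  have hsplit : ∑ U ∈ S.filter (fun (U : Submodule F (Fin n → F)) => s ≤ finrank F U),
        (q ^ finrank F ↥(U ⊓ W) - 1)
      = (∑ U ∈ S.filter (fun (U : Submodule F (Fin n → F)) => s ≤ finrank F U),
          q ^ finrank F ↥(U ⊓ W))
        - ((S.filter (fun (U : Submodule F (Fin n → F)) => s ≤ finrank F U)).card : ℤ) := by
    rw [Finset.sum_sub_distrib, Finset.sum_const]; simp
  rw [hsplit] at key
  obtain ⟨a, ha⟩ := hbig_dvd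
  obtain ⟨w, hw⟩ := hW_dvd
  exact ⟨w - a, by linear_combination key + hw - ha⟩


open scoped Classical in
lemma dual_filter_card [Fintype (Module.Dual F (Fin n → F))]
    (U : Submodule F (Fin n → F)) (h1 : finrank F U = 1) :
    (Finset.univ.filter (fun φ : Module.Dual F (Fin n → F) => U ≤ LinearMap.ker φ)).card
      = Fintype.card F ^ (n - 1) := by
  have hiff : ∀ φ : Module.Dual F (Fin n → F),
      (U ≤ LinearMap.ker φ) ↔ φ ∈ U.dualAnnihilator := by
    intro φ
    rw [Submodule.mem_dualAnnihilator]
    constructor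
    · intro h w hw; exact LinearMap.mem_ker.mp (h hw)
    · intro h w hw; exact LinearMap.mem_ker.mpr (h w hw)
  have hann : finrank F U.dualAnnihilator = n - 1 := by
    have h := LinearEquiv.finrank_eq (R := F) (M := (Fin n → F) ⧸ U)
      (N := U.dualAnnihilator) (Subspace.quotEquivAnnihilator U)
    have h2 := Submodule.finrank_quotient_add_finrank U
    have h3 : finrank F (Fin n → F) = n := by simp
    omega
  calc (Finset.univ.filter
        (fun φ : Module.Dual F (Fin n → F) => U ≤ LinearMap.ker φ)).card
      = (Finset.univ.filter
        (fun φ : Module.Dual F (Fin n → F) => φ ∈ U.dualAnnihilator)).card := by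
        apply Finset.card_bij (fun φ _ => φ) <;> simp [hiff]
    _ = Fintype.card U.dualAnnihilator := (Fintype.card_subtype _).symm
    _ = Fintype.card F ^ (n - 1) := by
        rw [card_eq_pow_finrank (K := F), hann]

open scoped Classical in
lemma averaging (hq2 : 2 ≤ Fintype.card F) (hn : 1 ≤ n)
    (Holes : Finset (Submodule F (Fin n → F)))
    (hH1 : ∀ U ∈ Holes, finrank F U = 1)
    (hm : 1 ≤ Holes.card) :
    ∃ φ : Module.Dual F (Fin n → F), φ ≠ 0 ∧
      Fintype.card F * (Holes.filter (fun U => U ≤ LinearMap.ker φ)).card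
        < Holes.card := by
  haveI : Finite (Module.Dual F (Fin n → F)) :=
    Finite.of_injective _ (DFunLike.coe_injective (F := Module.Dual F (Fin n → F)))
  haveI : Fintype (Module.Dual F (Fin n → F)) := Fintype.ofFinite _
  set q := Fintype.card F with hq
  set A := q ^ (n - 1) with hA
  have hA1 : 1 ≤ A := Nat.one_le_pow _ _ (by omega)
  set T : Finset (Module.Dual F (Fin n → F)) := Finset.univ.erase 0 with hT
  have hcardD : Fintype.card (Module.Dual F (Fin n → F)) = q * A := by
    rw [card_eq_pow_finrank (K := F)]
    have h1 : finrank F (Module.Dual F (Fin n → F)) = n := by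
      rw [Subspace.dual_finrank_eq]; simp
    rw [h1, hA, hq, ← pow_succ']
    congr 1; omega
  have hTcard : T.card = q * A - 1 := by
    rw [hT, Finset.card_erase_of_mem (Finset.mem_univ _), Finset.card_univ, hcardD]
  -- the double counting
  have hswap : ∑ φ ∈ T, (Holes.filter (fun U => U ≤ LinearMap.ker φ)).card
      = Holes.card * (A - 1) := by
    have h1 : ∀ φ ∈ T, (Holes.filter (fun U => U ≤ LinearMap.ker φ)).card
        = ∑ U ∈ Holes, if U ≤ LinearMap.ker φ then 1 else 0 := by
      intro φ _; rw [Finset.card_filter]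
    rw [Finset.sum_congr rfl h1, Finset.sum_comm]
    have h2 : ∀ U ∈ Holes,
        (∑ φ ∈ T, if U ≤ LinearMap.ker φ then 1 else 0) = A - 1 := by
      intro U hU
      rw [← Finset.card_filter]
      have he : T.filter (fun φ => U ≤ LinearMap.ker φ)
          = (Finset.univ.filter
              (fun φ : Module.Dual F (Fin n → F) => U ≤ LinearMap.ker φ)).erase 0 := by
        ext φ
        simp only [hT, Finset.mem_filter, Finset.mem_erase, Finset.mem_univ, true_and]
        tauto
      rw [he, Finset.card_erase_of_mem, dual_filter_card U (hH1 U hU)]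
      simp [LinearMap.ker_zero]
    rw [Finset.sum_congr rfl h2, Finset.sum_const, smul_eq_mul]
  by_contra hcon
  push_neg at hcon
  have hbound : ∀ φ ∈ T, Holes.card ≤ q * (Holes.filter
      (fun U => U ≤ LinearMap.ker φ)).card := by
    intro φ hφ
    rw [hT, Finset.mem_erase] at hφ
    exact hcon φ hφ.1
  have hsum : T.card * Holes.card ≤ q * (Holes.card * (A - 1)) := by
    calc T.card * Holes.card = ∑ _φ ∈ T, Holes.card := by
          rw [Finset.sum_const, smul_eq_mul]
      _ ≤ ∑ φ ∈ T, q * (Holes.filter (fun U => U ≤ LinearMap.ker φ)).card :=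
          Finset.sum_le_sum hbound
      _ = q * ∑ φ ∈ T, (Holes.filter (fun U => U ≤ LinearMap.ker φ)).card :=
          (Finset.mul_sum _ _ _).symm
      _ = q * (Holes.card * (A - 1)) := by rw [hswap]
  rw [hTcard] at hsum
  -- contradiction by arithmetic
  have hqA : 1 ≤ q * A := by
    have : 0 < q * A := by positivity
    omega
  zify [hA1, hqA] at hsum
  nlinarith [hsum, hm, hq2, hA1]

end Helpers

/-- Key lemma: from a vector space partition of hole-type `(t,s,m₁)` with `l·q^s + x`
members of dimension `≥ s`, `x ≥ 1` and `m₁ = b·q^s + c ≥ 1`, one finds a hyperplane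
with `b̂·q^{s−1} + (c+x−1)/q` holes for some integer `b̂ < b`. -/
theorem stmt_5 (q n t s l x : ℕ) (hq : 1 < q) (F : Type*) [Field F] [Fintype F]
    (hF : Fintype.card F = q) (hnt : t < n) (hts : s ≤ t) (hs : 2 ≤ s)
    (P : Set (Submodule F (Fin n → F)))
    (hP : ∀ v : Fin n → F, v ≠ 0 → ∃! U, U ∈ P ∧ v ∈ U)
    (hP0 : ∀ U ∈ P, U ≠ ⊥)
    (hPnontriv : ∃ U ∈ P, 1 < finrank F U)
    (hdim : ∀ U ∈ P, finrank F U = 1 ∨ (s ≤ finrank F U ∧ finrank F U ≤ t))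
    (hcount : {U ∈ P | s ≤ finrank F U}.ncard = l * q ^ s + x) (hx : 1 ≤ x)
    (m1 : ℕ) (hm1 : m1 = {U ∈ P | finrank F U = 1}.ncard) (hm11 : 1 ≤ m1)
    (b c : ℤ) (hbc : (m1 : ℤ) = b * (q : ℤ) ^ s + c)
    (hdiv : (q : ℤ) ∣ c + (x : ℤ) - 1) :
    ∃ H : Submodule F (Fin n → F), finrank F H = n - 1 ∧
      ∃ bhat : ℤ, bhat < b ∧
        ({U ∈ P | finrank F U = 1 ∧ U ≤ H}.ncard : ℤ)
          = bhat * (q : ℤ) ^ (s - 1) + (c + (x : ℤ) - 1) / (q : ℤ) := by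
  classical
  haveI : Finite (Module.Dual F (Fin n → F)) :=
    Finite.of_injective _ (DFunLike.coe_injective (F := Module.Dual F (Fin n → F)))
  haveI : Fintype (Module.Dual F (Fin n → F)) := Fintype.ofFinite _
  subst hF
  set q := Fintype.card F with hqdef
  set S := P.toFinite.toFinset with hSdef
  set Holes := S.filter (fun (U : Submodule F (Fin n → F)) => finrank F U = 1) with hHdef
  have hdim' : ∀ U ∈ P, finrank F U = 1 ∨ s ≤ finrank F U :=
    fun U hU => (hdim U hU).imp id And.left
  -- m1 = Holes.card
  have hm1' : m1 = Holes.card := by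
    rw [hm1]
    have : {U ∈ P | finrank F U = 1} = ↑Holes := by
      ext U
      simp [hHdef, hSdef, Set.Finite.mem_toFinset, Set.mem_ofPred_eq]
    rw [this, Set.ncard_coe_finset]
  -- N = big count
  have hN : (S.filter (fun (U : Submodule F (Fin n → F)) => s ≤ finrank F U)).card
      = l * q ^ s + x := by
    rw [← hcount]
    have : {U ∈ P | s ≤ finrank F U}
        = ↑(S.filter (fun (U : Submodule F (Fin n → F)) => s ≤ finrank F U)) := by
      ext U
      simp [hSdef, Set.Finite.mem_toFinset, Set.mem_ofPred_eq]
    rw [this, Set.ncard_coe_finset]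
  -- averaging
  obtain ⟨φ, hφ0, hφlt⟩ := averaging hq (by omega) Holes
    (fun U hU => (Finset.mem_filter.mp hU).2) (by omega)
  set H := LinearMap.ker φ with hHdef2
  -- finrank of H
  have hrange : finrank F (LinearMap.range φ) = 1 := by
    have hsurj : Function.Surjective φ := by
      obtain ⟨v, hv⟩ : ∃ v, φ v ≠ 0 := by
        by_contra hc
        push_neg at hc
        exact hφ0 (LinearMap.ext fun v => by simp [hc v])
      intro y
      refine ⟨(y * (φ v)⁻¹) • v, ?_⟩
      rw [map_smul, smul_eq_mul, mul_assoc, inv_mul_cancel₀ hv, mul_one]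
    rw [LinearMap.range_eq_top.mpr hsurj, finrank_top]
    simp
  have hker : finrank F H = n - 1 := by
    have h1 := LinearMap.finrank_range_add_finrank_ker φ
    have h2 : finrank F (Fin n → F) = n := by simp
    rw [hrange, h2] at h1
    rw [hHdef2]
    omega
  -- congruence for ⊤
  have D1 := cong_aux (s := s) (r := s) hs P hP hdim' (⊤ : Submodule F (Fin n → F)) (by
      have htop : finrank F (⊤ : Submodule F (Fin n → F)) = n := by
        rw [finrank_top]; simp
      omega)
    (fun U hU hsU => by rwa [inf_top_eq])
  -- congruence for H
  have D2 := cong_aux (s := s) (r := s - 1) hs P hP hdim' H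
    (by rw [hker]; omega)
    (fun U hU hsU => by
      have h1 := Submodule.finrank_sup_add_finrank_inf_eq U H
      have h2 : finrank F ↥(U ⊔ H) ≤ n := by
        have := Submodule.finrank_le (U ⊔ H)
        simpa using this
      have h3 : n - 1 ≤ n := by omega
      rw [hker] at h1
      omega)
  -- identify the cardinalities in D1
  have hD1top : S.filter (fun (U : Submodule F (Fin n → F)) =>
      finrank F U = 1 ∧ U ≤ (⊤ : Submodule F (Fin n → F))) = Holes := by
    apply Finset.filter_congr
    intro U _
    simp
  rw [hD1top, hN] at D1
  rw [hN] at D2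
  -- m̂ : number of holes in H
  set mh := (Holes.filter (fun U => U ≤ H)).card with hmhdef
  have hD2m : S.filter (fun (U : Submodule F (Fin n → F)) =>
      finrank F U = 1 ∧ U ≤ H) = Holes.filter (fun U => U ≤ H) := by
    rw [hHdef, Finset.filter_filter]
  rw [hD2m] at D2
  rw [← hm1'] at D1
  -- combine congruences
  have hq1 : (1 : ℤ) ≤ (q : ℤ) := by exact_mod_cast hq.le
  have hqs : ((q : ℤ)) ^ s = (q : ℤ) * (q : ℤ) ^ (s - 1) := by
    have hs1 : s = (s - 1) + 1 := by omega
    calc ((q : ℤ)) ^ s = (q : ℤ) ^ ((s - 1) + 1) := by rw [← hs1]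
      _ = (q : ℤ) * (q : ℤ) ^ (s - 1) := by rw [pow_succ]; ring
  have D2' : ((q : ℤ)) ^ s ∣ (q : ℤ) * (((q : ℤ) - 1) * (mh : ℤ)
      - (((l * q ^ s + x : ℕ) : ℤ) - 1)) := by
    rw [hqs]
    exact mul_dvd_mul_left _ D2
  have D3 : ((q : ℤ)) ^ s ∣ ((q : ℤ) - 1) *
      ((q : ℤ) * (mh : ℤ) - (m1 : ℤ) - (((l * q ^ s + x : ℕ) : ℤ) - 1)) := by
    have := dvd_sub D2' D1
    have heq : (q : ℤ) * (((q : ℤ) - 1) * (mh : ℤ) - (((l * q ^ s + x : ℕ) : ℤ) - 1))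
        - (((q : ℤ) - 1) * (m1 : ℤ) - (((l * q ^ s + x : ℕ) : ℤ) - 1))
        = ((q : ℤ) - 1) * ((q : ℤ) * (mh : ℤ) - (m1 : ℤ)
            - (((l * q ^ s + x : ℕ) : ℤ) - 1)) := by ring
    rwa [heq] at this
  have hcop : IsCoprime ((q : ℤ) ^ s) ((q : ℤ) - 1) :=
    (IsCoprime.pow_left (⟨1, -1, by ring⟩ : IsCoprime ((q : ℤ)) ((q : ℤ) - 1)))
  obtain ⟨K, hK⟩ := hcop.dvd_of_dvd_mul_left D3
  -- hK : q*mh - m1 - (N-1) = q^s * K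
  have hKey : (q : ℤ) * (mh : ℤ) = (m1 : ℤ) + (x : ℤ) - 1 + (q : ℤ) ^ s * (K + l) := by
    have hcast : ((l * q ^ s + x : ℕ) : ℤ) = (l : ℤ) * (q : ℤ) ^ s + (x : ℤ) := by
      push_cast; ring
    rw [hcast] at hK
    linarith [hK]
  -- strict inequality
  have hlt : (q : ℤ) * (mh : ℤ) < (m1 : ℤ) := by
    rw [hm1']
    exact_mod_cast hφlt
  have hKl : K + l ≤ -1 := by
    by_contra hcon
    push_neg at hcon
    have h1 : 0 ≤ K + l := by omega
    have h2 : (0 : ℤ) ≤ (q : ℤ) ^ s * (K + l) := by positivity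
    have h3 : (1 : ℤ) ≤ (x : ℤ) := by exact_mod_cast hx
    linarith
  refine ⟨H, hker, b + (K + l), by omega, ?_⟩
  -- identify ncard with mh
  have hset : {U ∈ P | finrank F U = 1 ∧ U ≤ H} = ↑(Holes.filter (fun U => U ≤ H)) := by
    ext U
    simp [hHdef, hSdef, Set.Finite.mem_toFinset, Set.mem_ofPred_eq, and_assoc]
  rw [hset, Set.ncard_coe_finset, ← hmhdef]
  -- final computation
  have hd : (q : ℤ) * ((c + (x : ℤ) - 1) / (q : ℤ)) = c + (x : ℤ) - 1 :=
    Int.mul_ediv_cancel' hdiv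
  have hqne : (q : ℤ) ≠ 0 := by omega
  apply mul_left_cancel₀ hqne
  calc (q : ℤ) * (mh : ℤ)
      = (m1 : ℤ) + (x : ℤ) - 1 + (q : ℤ) ^ s * (K + l) := hKey
    _ = (b + (K + l)) * ((q : ℤ) * (q : ℤ) ^ (s - 1)) + (c + (x : ℤ) - 1) := by
        rw [← hqs, hbc]; ring
    _ = (q : ℤ) * ((b + (K + l)) * (q : ℤ) ^ (s - 1) + (c + (x : ℤ) - 1) / (q : ℤ)) := by
        rw [mul_add, hd]; ring
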